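/- Inverse-probability-of-censoring identity for the treated (paper's equation (6)): in the censoring setup, for every measurable φ : [0,∞) → [0,∞) with φ(z) < c₀ for all z, and every w ∈ ℝ, E[ (δ / G(Y)) · 1{Y ≤ φ(Z̃)} · 1{D̃ = 1} · 1{W ≤ w} ] = P(T ≤ φ(Z) and D = 1 and W ≤ w). -/

import Mathlib

open MeasureTheory ProbabilityTheory Set
open scoped ENNReal

/-- Paper's equation (6): the inverse-probability-of-censoring identity for the
treated. Here `G(t) = P(C ≥ t)`, `Y = min(T,C)`, `δ = 1{T ≤ C}`, `Z̃ = min(Z,Y)`,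
`D̃ = 1{Z ≤ Y}`, `D = 1{Z ≤ T}`, and `φ(z) < c₀` (the upper bound of the support of
`C`) is expressed as `∃ s > φ(z), G(s) > 0`. -/
theorem ipcw_identity_treated
    {Ω : Type*} [MeasureSpace Ω] [IsProbabilityMeasure (ℙ : Measure Ω)]
    (T Z W C : Ω → ℝ)
    (hT : Measurable T) (hZ : Measurable Z) (hW : Measurable W) (hC : Measurable C)
    (hTnn : ∀ ω, 0 ≤ T ω) (hZnn : ∀ ω, 0 ≤ Z ω) (hCnn : ∀ ω, 0 ≤ C ω)
    (hindep : IndepFun C (fun ω => (T ω, Z ω, W ω)) ℙ) :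
    ∀ φ : ℝ → ℝ, Measurable φ → (∀ z, 0 ≤ φ z) →
      (∀ z, ∃ s, φ z < s ∧ 0 < ℙ {ω | s ≤ C ω}) → ∀ w : ℝ,
      (∫ ω, (if T ω ≤ C ω then 1 / (ℙ {ω' | min (T ω) (C ω) ≤ C ω'}).toReal else 0)
          * (if min (T ω) (C ω) ≤ φ (min (Z ω) (min (T ω) (C ω))) then (1:ℝ) else 0)
          * (if Z ω ≤ min (T ω) (C ω) then (1:ℝ) else 0)
          * (if W ω ≤ w then (1:ℝ) else 0) ∂ℙ)
        = (ℙ {ω | T ω ≤ φ (Z ω) ∧ Z ω ≤ T ω ∧ W ω ≤ w}).toReal := by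
  intro φ hφ hφnn hφlt w
  classical
  set V : Ω → ℝ × ℝ × ℝ := fun ω => (T ω, Z ω, W ω) with hVdef
  have hVm : Measurable V := hT.prodMk (hZ.prodMk hW)
  set G : ℝ → ℝ≥0∞ := fun t => ℙ {ω' | t ≤ C ω'} with hGdef
  have hGanti : Antitone G := by
    intro s t hst
    exact measure_mono (fun ω h => le_trans hst h)
  have hGm : Measurable G := hGanti.measurable
  have hGfin : ∀ t, G t ≠ ∞ := fun t => measure_ne_top _ _
  have hGpos : ∀ t z, t ≤ φ z → 0 < G t := by
    intro t z htz
    obtain ⟨s, hs1, hs2⟩ := hφlt z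
    exact lt_of_lt_of_le hs2 (hGanti (htz.trans hs1.le))
  have hGmap : ∀ t, (Measure.map C ℙ) (Ici t) = G t := by
    intro t
    rw [Measure.map_apply hC measurableSet_Ici]
    rfl
  -- the simplified integrand
  set f : Ω → ℝ := fun ω =>
    if T ω ≤ C ω ∧ Z ω ≤ T ω ∧ T ω ≤ φ (Z ω) ∧ W ω ≤ w
      then ((G (T ω)).toReal)⁻¹ else 0 with hfdef
  have hpt : ∀ ω,
      (if T ω ≤ C ω then 1 / (ℙ {ω' | min (T ω) (C ω) ≤ C ω'}).toReal else 0)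
        * (if min (T ω) (C ω) ≤ φ (min (Z ω) (min (T ω) (C ω))) then (1:ℝ) else 0)
        * (if Z ω ≤ min (T ω) (C ω) then (1:ℝ) else 0)
        * (if W ω ≤ w then (1:ℝ) else 0) = f ω := by
    intro ω
    simp only [hfdef]
    by_cases h1 : T ω ≤ C ω
    · rw [min_eq_left h1]
      by_cases h2 : Z ω ≤ T ω
      · rw [min_eq_left h2]
        by_cases h3 : T ω ≤ φ (Z ω)
        · by_cases h4 : W ω ≤ w <;>
            simp [h1, h2, h3, h4, one_div, hGdef]
        · simp [h1, h2, h3]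
      · simp [h1, h2]
    · simp [h1]
  have hfm : Measurable f := by
    have hcond : MeasurableSet {ω | T ω ≤ C ω ∧ Z ω ≤ T ω ∧ T ω ≤ φ (Z ω) ∧ W ω ≤ w} := by
      refine ((measurableSet_le hT hC).inter (((measurableSet_le hZ hT)).inter
        (((measurableSet_le hT (hφ.comp hZ))).inter (measurableSet_le hW measurable_const))))
    exact Measurable.ite hcond ((hGm.comp hT).ennreal_toReal.inv) measurable_const
  have hfnn : ∀ ω, 0 ≤ f ω := by
    intro ω
    simp only [hfdef]
    split_ifs
    · positivity
    · exact le_rfl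
  -- the ENNReal-valued kernel on the product space
  set F : ℝ × (ℝ × ℝ × ℝ) → ℝ≥0∞ := fun p =>
    if p.2.1 ≤ p.1 ∧ p.2.2.1 ≤ p.2.1 ∧ p.2.1 ≤ φ p.2.2.1 ∧ p.2.2.2 ≤ w
      then (G p.2.1)⁻¹ else 0 with hFdef
  have hFm : Measurable F := by
    apply Measurable.ite
    · exact (measurableSet_le measurable_snd.fst measurable_fst).inter
        ((measurableSet_le measurable_snd.snd.fst measurable_snd.fst).inter
          ((measurableSet_le measurable_snd.fst (hφ.comp measurable_snd.snd.fst)).inter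
            (measurableSet_le measurable_snd.snd.snd measurable_const)))
    · exact (hGm.comp measurable_snd.fst).inv
    · exact measurable_const
  have hofReal : ∀ ω, ENNReal.ofReal (f ω) = F (C ω, V ω) := by
    intro ω
    simp only [hfdef, hFdef, hVdef]
    split_ifs with h
    · have hp : 0 < G (T ω) := hGpos _ _ h.2.2.1
      rw [ENNReal.ofReal_inv_of_pos (ENNReal.toReal_pos hp.ne' (hGfin _)),
        ENNReal.ofReal_toReal (hGfin _)]
    · simp
  -- main lintegral computation
  have hmap : Measure.map (fun ω => (C ω, V ω)) ℙ = (Measure.map C ℙ).prod (Measure.map V ℙ) :=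
    (indepFun_iff_map_prod_eq_prod_map_map hC.aemeasurable hVm.aemeasurable).mp hindep
  have hlint : ∫⁻ ω, ENNReal.ofReal (f ω) ∂ℙ
      = ℙ {ω | T ω ≤ φ (Z ω) ∧ Z ω ≤ T ω ∧ W ω ≤ w} := by
    calc ∫⁻ ω, ENNReal.ofReal (f ω) ∂ℙ
        = ∫⁻ ω, F (C ω, V ω) ∂ℙ := by simp_rw [hofReal]
      _ = ∫⁻ p, F p ∂(Measure.map (fun ω => (C ω, V ω)) ℙ) :=
          (lintegral_map hFm (hC.prodMk hVm)).symm
      _ = ∫⁻ p, F p ∂((Measure.map C ℙ).prod (Measure.map V ℙ)) := by rw [hmap]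
      _ = ∫⁻ v, ∫⁻ c, F (c, v) ∂(Measure.map C ℙ) ∂(Measure.map V ℙ) :=
          lintegral_prod_symm F hFm.aemeasurable
      _ = ∫⁻ v, Set.indicator {q : ℝ × ℝ × ℝ | q.2.1 ≤ q.1 ∧ q.1 ≤ φ q.2.1 ∧ q.2.2 ≤ w}
            (fun _ => 1) v ∂(Measure.map V ℙ) := by
          refine lintegral_congr fun v => ?_
          obtain ⟨t, z, w'⟩ := v
          have : (fun c => F (c, (t, z, w'))) = Set.indicator (Ici t)
              (fun _ => if z ≤ t ∧ t ≤ φ z ∧ w' ≤ w then (G t)⁻¹ else 0) := by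
            funext c
            simp only [hFdef, Set.indicator, mem_Ici]
            exact ite_and _ _ _ _
          rw [this, lintegral_indicator measurableSet_Ici, setLIntegral_const, hGmap]
          by_cases h2 : z ≤ t ∧ t ≤ φ z ∧ w' ≤ w
          · rw [if_pos h2, ENNReal.inv_mul_cancel (hGpos _ _ h2.2.1).ne' (hGfin t)]
            simp [Set.indicator, h2]
          · rw [if_neg h2, zero_mul]
            simp [Set.indicator, h2]
      _ = (Measure.map V ℙ) {q : ℝ × ℝ × ℝ | q.2.1 ≤ q.1 ∧ q.1 ≤ φ q.2.1 ∧ q.2.2 ≤ w} := by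
          rw [lintegral_indicator]
          · simp
          · exact (measurableSet_le (measurable_snd.fst) measurable_fst).inter
              ((measurableSet_le measurable_fst (hφ.comp measurable_snd.fst)).inter
                (measurableSet_le measurable_snd.snd measurable_const))
      _ = ℙ {ω | T ω ≤ φ (Z ω) ∧ Z ω ≤ T ω ∧ W ω ≤ w} := by
          rw [Measure.map_apply hVm]
          · congr 1
            ext ω
            simp only [hVdef, mem_preimage, mem_setOf_eq]
            tauto
          · exact (measurableSet_le (measurable_snd.fst) measurable_fst).inter
              ((measurableSet_le measurable_fst (hφ.comp measurable_snd.fst)).inter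
                (measurableSet_le measurable_snd.snd measurable_const))
  calc (∫ ω, (if T ω ≤ C ω then 1 / (ℙ {ω' | min (T ω) (C ω) ≤ C ω'}).toReal else 0)
          * (if min (T ω) (C ω) ≤ φ (min (Z ω) (min (T ω) (C ω))) then (1:ℝ) else 0)
          * (if Z ω ≤ min (T ω) (C ω) then (1:ℝ) else 0)
          * (if W ω ≤ w then (1:ℝ) else 0) ∂ℙ)
      = ∫ ω, f ω ∂ℙ := integral_congr_ae (Filter.Eventually.of_forall hpt)
    _ = (∫⁻ ω, ENNReal.ofReal (f ω) ∂ℙ).toReal :=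
        integral_eq_lintegral_of_nonneg_ae (Filter.Eventually.of_forall hfnn)
          hfm.aestronglyMeasurable
    _ = (ℙ {ω | T ω ≤ φ (Z ω) ∧ Z ω ≤ T ω ∧ W ω ≤ w}).toReal := by rw [hlint]
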